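/- (Green's theorem for the parabolic operator, on a rectangle.) Let k be a nonzero complex number, let x₁ < x₂ and y₁ < y₂ be real, and let v, w : ℝ² → ℂ be twice continuously differentiable on an open set containing the rectangle [x₁,x₂]×[y₁,y₂]. Then ∫_{x₁}^{x₂} ∫_{y₁}^{y₂} ( L[v](x,y)·w(x,y) − L'[w](x,y)·v(x,y) ) dy dx = ∫_{y₁}^{y₂} ( v(x₂,y)w(x₂,y) − v(x₁,y)w(x₁,y) ) dy + (2ik)^{-1} ∫_{x₁}^{x₂} ( (w ∂_y v − v ∂_y w)(x,y₂) − (w ∂_y v − v ∂_y w)(x,y₁) ) dx. -/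

import Mathlib

open MeasureTheory

/-- Partial derivative in the first (`x`) variable. -/
noncomputable def pdx (f : ℝ → ℝ → ℂ) (x y : ℝ) : ℂ :=
  deriv (fun t : ℝ => f t y) x

/-- Partial derivative in the second (`y`) variable. -/
noncomputable def pdy (f : ℝ → ℝ → ℂ) (x y : ℝ) : ℂ :=
  deriv (fun s : ℝ => f x s) y

/-- Second partial derivative in the second (`y`) variable. -/
noncomputable def pdyy (f : ℝ → ℝ → ℂ) (x y : ℝ) : ℂ :=
  deriv (fun s : ℝ => pdy f x s) y

/-- The parabolic operator `L[u] = ∂ₓu + (2ik)⁻¹ ∂ᵧ²u`. -/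
noncomputable def Lpar (k : ℂ) (f : ℝ → ℝ → ℂ) (x y : ℝ) : ℂ :=
  pdx f x y + (2 * Complex.I * k)⁻¹ * pdyy f x y

/-- The formal adjoint parabolic operator `L'[w] = -∂ₓw + (2ik)⁻¹ ∂ᵧ²w`. -/
noncomputable def Lpar' (k : ℂ) (f : ℝ → ℝ → ℂ) (x y : ℝ) : ℂ :=
  -pdx f x y + (2 * Complex.I * k)⁻¹ * pdyy f x y

section Aux

lemma slice_x {F : ℝ × ℝ → ℂ} {U : Set (ℝ × ℝ)} (hU : IsOpen U)
    (hF : ContDiffOn ℝ 1 F U) {x y : ℝ} (hxy : (x, y) ∈ U) :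
    HasDerivAt (fun t => F (t, y)) (fderiv ℝ F (x, y) (1, 0)) x := by
  have hd : DifferentiableAt ℝ F (x, y) :=
    (hF.differentiableOn one_ne_zero).differentiableAt (hU.mem_nhds hxy)
  have h1 : HasDerivAt (fun t : ℝ => ((t, y) : ℝ × ℝ)) ((1 : ℝ), (0 : ℝ)) x :=
    (hasDerivAt_id x).prodMk (hasDerivAt_const x y)
  exact hd.hasFDerivAt.comp_hasDerivAt x h1

lemma slice_y {F : ℝ × ℝ → ℂ} {U : Set (ℝ × ℝ)} (hU : IsOpen U)
    (hF : ContDiffOn ℝ 1 F U) {x y : ℝ} (hxy : (x, y) ∈ U) :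
    HasDerivAt (fun s => F (x, s)) (fderiv ℝ F (x, y) (0, 1)) y := by
  have hd : DifferentiableAt ℝ F (x, y) :=
    (hF.differentiableOn one_ne_zero).differentiableAt (hU.mem_nhds hxy)
  have h1 : HasDerivAt (fun s : ℝ => ((x, s) : ℝ × ℝ)) ((0 : ℝ), (1 : ℝ)) y :=
    (hasDerivAt_const y x).prodMk (hasDerivAt_id y)
  exact hd.hasFDerivAt.comp_hasDerivAt y h1

lemma cont_fderiv_apply {F : ℝ × ℝ → ℂ} {U : Set (ℝ × ℝ)} (hU : IsOpen U)
    (hF : ContDiffOn ℝ 1 F U) (u : ℝ × ℝ) :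
    ContinuousOn (fun p => fderiv ℝ F p u) U :=
  (hF.continuousOn_fderiv_of_isOpen hU le_rfl).clm_apply continuousOn_const

lemma contDiffOn_fderiv_apply {F : ℝ × ℝ → ℂ} {U : Set (ℝ × ℝ)} (hU : IsOpen U)
    (hF : ContDiffOn ℝ 2 F U) (u : ℝ × ℝ) :
    ContDiffOn ℝ 1 (fun p => fderiv ℝ F p u) U :=
  (hF.fderiv_of_isOpen hU (by norm_num)).clm_apply contDiffOn_const

lemma pdy_eq {f : ℝ → ℝ → ℂ} {U : Set (ℝ × ℝ)} (hU : IsOpen U)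
    (hf : ContDiffOn ℝ 1 (fun p : ℝ × ℝ => f p.1 p.2) U) {x y : ℝ} (hxy : (x, y) ∈ U) :
    pdy f x y = fderiv ℝ (fun p : ℝ × ℝ => f p.1 p.2) (x, y) (0, 1) :=
  (slice_y hU hf hxy).deriv

lemma hasDerivAt_pdy {f : ℝ → ℝ → ℂ} {U : Set (ℝ × ℝ)} (hU : IsOpen U)
    (hf : ContDiffOn ℝ 2 (fun p : ℝ × ℝ => f p.1 p.2) U) {x y : ℝ} (hxy : (x, y) ∈ U) :
    HasDerivAt (fun s => pdy f x s)
      (fderiv ℝ (fun q => fderiv ℝ (fun p : ℝ × ℝ => f p.1 p.2) q (0, 1)) (x, y) (0, 1)) y := by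
  have hG : ContDiffOn ℝ 1 (fun q => fderiv ℝ (fun p : ℝ × ℝ => f p.1 p.2) q (0, 1)) U :=
    contDiffOn_fderiv_apply hU hf _
  have h1 := slice_y hU hG hxy
  apply h1.congr_of_eventuallyEq
  have hev : ∀ᶠ s in nhds y, (x, s) ∈ U := by
    have hc : Continuous (fun s : ℝ => ((x, s) : ℝ × ℝ)) := continuous_const.prodMk continuous_id
    exact hc.continuousAt.preimage_mem_nhds (hU.mem_nhds hxy)
  filter_upwards [hev] with s hs
  exact pdy_eq hU (hf.of_le (by norm_num)) hs

/-- Core integral identity. -/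
lemma green_core (c : ℂ) {x₁ x₂ y₁ y₂ : ℝ} (hx : x₁ ≤ x₂) (hy : y₁ ≤ y₂)
    {U : Set (ℝ × ℝ)} (hUrect : Set.Icc x₁ x₂ ×ˢ Set.Icc y₁ y₂ ⊆ U)
    {G H PG D : ℝ × ℝ → ℂ}
    (hPG : ContinuousOn PG U) (hD : ContinuousOn D U) (hH : ContinuousOn H U)
    (hG' : ∀ x ∈ Set.Icc x₁ x₂, ∀ y ∈ Set.Icc y₁ y₂,
      HasDerivAt (fun t => G (t, y)) (PG (x, y)) x)
    (hH' : ∀ x ∈ Set.Icc x₁ x₂, ∀ y ∈ Set.Icc y₁ y₂,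
      HasDerivAt (fun s => H (x, s)) (D (x, y)) y) :
    (∫ x in x₁..x₂, ∫ y in y₁..y₂, (PG (x, y) + c * D (x, y)))
      = (∫ y in y₁..y₂, (G (x₂, y) - G (x₁, y)))
        + c * ∫ x in x₁..x₂, (H (x, y₂) - H (x, y₁)) := by
  have hPGr : ContinuousOn PG (Set.Icc x₁ x₂ ×ˢ Set.Icc y₁ y₂) := hPG.mono hUrect
  have hDr : ContinuousOn D (Set.Icc x₁ x₂ ×ˢ Set.Icc y₁ y₂) := hD.mono hUrect
  have hHr : ContinuousOn H (Set.Icc x₁ x₂ ×ˢ Set.Icc y₁ y₂) := hH.mono hUrect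
  -- vertical slices continuity
  have hsliceY : ∀ (K : ℝ × ℝ → ℂ), ContinuousOn K (Set.Icc x₁ x₂ ×ˢ Set.Icc y₁ y₂) →
      ∀ x ∈ Set.Icc x₁ x₂, ContinuousOn (fun y => K (x, y)) (Set.Icc y₁ y₂) := by
    intro K hK x hxm
    exact hK.comp ((continuous_const.prodMk continuous_id).continuousOn)
      (fun y hym => Set.mk_mem_prod hxm hym)
  have hsliceX : ∀ (K : ℝ × ℝ → ℂ), ContinuousOn K (Set.Icc x₁ x₂ ×ˢ Set.Icc y₁ y₂) →
      ∀ y ∈ Set.Icc y₁ y₂, ContinuousOn (fun x => K (x, y)) (Set.Icc x₁ x₂) := by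
    intro K hK y hym
    exact hK.comp ((continuous_id.prodMk continuous_const).continuousOn)
      (fun x hxm => Set.mk_mem_prod hxm hym)
  -- Step 1: rewrite inner integral
  have key : ∀ x ∈ Set.Icc x₁ x₂,
      (∫ y in y₁..y₂, (PG (x, y) + c * D (x, y)))
        = (∫ y in y₁..y₂, PG (x, y)) + c * (H (x, y₂) - H (x, y₁)) := by
    intro x hxm
    have hPGi : IntervalIntegrable (fun y => PG (x, y)) volume y₁ y₂ := by
      apply ContinuousOn.intervalIntegrable
      rw [Set.uIcc_of_le hy]; exact hsliceY PG hPGr x hxm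
    have hDi : IntervalIntegrable (fun y => D (x, y)) volume y₁ y₂ := by
      apply ContinuousOn.intervalIntegrable
      rw [Set.uIcc_of_le hy]; exact hsliceY D hDr x hxm
    have hftc : (∫ y in y₁..y₂, D (x, y)) = H (x, y₂) - H (x, y₁) :=
      intervalIntegral.integral_eq_sub_of_hasDerivAt
        (fun y hym => hH' x hxm y (by rwa [Set.uIcc_of_le hy] at hym)) hDi
    rw [intervalIntegral.integral_add hPGi (hDi.const_mul c),
      intervalIntegral.integral_const_mul, hftc]
  rw [intervalIntegral.integral_congr
    (g := fun x => (∫ y in y₁..y₂, PG (x, y)) + c * (H (x, y₂) - H (x, y₁)))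
    (fun x hxm => key x (by rwa [Set.uIcc_of_le hx] at hxm))]
  -- Step 2: product integrability
  have hPGprod : Integrable (Function.uncurry fun x y => PG (x, y))
      ((volume.restrict (Set.Ioc x₁ x₂)).prod (volume.restrict (Set.Ioc y₁ y₂))) := by
    rw [Measure.prod_restrict, ← Measure.volume_eq_prod]
    have h1 : IntegrableOn PG (Set.Icc x₁ x₂ ×ˢ Set.Icc y₁ y₂) volume :=
      hPGr.integrableOn_compact (isCompact_Icc.prod isCompact_Icc)
    exact h1.mono_set (Set.prod_mono Set.Ioc_subset_Icc_self Set.Ioc_subset_Icc_self)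
  have hAint : IntervalIntegrable (fun x => ∫ y in y₁..y₂, PG (x, y)) volume x₁ x₂ := by
    rw [intervalIntegrable_iff, Set.uIoc_of_le hx]
    have h2 := hPGprod.integral_prod_left
    simpa [intervalIntegral.integral_of_le hy, IntegrableOn] using h2
  have hHtop : IntervalIntegrable (fun x => c * (H (x, y₂) - H (x, y₁))) volume x₁ x₂ := by
    apply IntervalIntegrable.const_mul
    apply ContinuousOn.intervalIntegrable
    rw [Set.uIcc_of_le hx]
    exact ((hsliceX H hHr y₂ (Set.right_mem_Icc.2 hy)).sub
      (hsliceX H hHr y₁ (Set.left_mem_Icc.2 hy)))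
  rw [intervalIntegral.integral_add hAint hHtop, intervalIntegral.integral_const_mul]
  congr 1
  -- Step 3: Fubini and FTC in x
  rw [intervalIntegral.integral_of_le hx]
  have h1 : ∀ x : ℝ, (∫ y in y₁..y₂, PG (x, y)) = ∫ y in Set.Ioc y₁ y₂, PG (x, y) :=
    fun x => intervalIntegral.integral_of_le hy
  simp_rw [h1]
  rw [MeasureTheory.integral_integral_swap hPGprod, intervalIntegral.integral_of_le hy]
  apply setIntegral_congr_fun measurableSet_Ioc
  intro y hym
  have hymIcc : y ∈ Set.Icc y₁ y₂ := Set.Ioc_subset_Icc_self hym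
  have hcont : IntervalIntegrable (fun x => PG (x, y)) volume x₁ x₂ := by
    apply ContinuousOn.intervalIntegrable
    rw [Set.uIcc_of_le hx]; exact hsliceX PG hPGr y hymIcc
  have hftc := intervalIntegral.integral_eq_sub_of_hasDerivAt
    (f := fun t => G (t, y)) (f' := fun x => PG (x, y))
    (fun x hxm => hG' x (by rwa [Set.uIcc_of_le hx] at hxm) y hymIcc) hcont
  show (∫ x in Set.Ioc x₁ x₂, PG (x, y)) = G (x₂, y) - G (x₁, y)
  rw [← intervalIntegral.integral_of_le hx]
  exact hftc

end Aux

/-- Green's theorem for the parabolic operator on a rectangle: for `v, w` twice continuously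
differentiable on an open set containing the rectangle `[x₁,x₂]×[y₁,y₂]`,
`∫∫ (L[v]·w − L'[w]·v) = ∫ (v w |_{x=x₂} − v w |_{x=x₁}) dy
  + (2ik)⁻¹ ∫ ((w ∂ᵧv − v ∂ᵧw)|_{y=y₂} − (w ∂ᵧv − v ∂ᵧw)|_{y=y₁}) dx`. -/
theorem parabolic_green_theorem_rectangle (k : ℂ) (hk : k ≠ 0)
    (x₁ x₂ y₁ y₂ : ℝ) (hx : x₁ < x₂) (hy : y₁ < y₂)
    (v w : ℝ → ℝ → ℂ) (U : Set (ℝ × ℝ)) (hU : IsOpen U)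
    (hUrect : Set.Icc x₁ x₂ ×ˢ Set.Icc y₁ y₂ ⊆ U)
    (hv : ContDiffOn ℝ 2 (fun p : ℝ × ℝ => v p.1 p.2) U)
    (hw : ContDiffOn ℝ 2 (fun p : ℝ × ℝ => w p.1 p.2) U) :
    (∫ x in x₁..x₂, ∫ y in y₁..y₂,
        (Lpar k v x y * w x y - Lpar' k w x y * v x y))
      = (∫ y in y₁..y₂, (v x₂ y * w x₂ y - v x₁ y * w x₁ y))
        + (2 * Complex.I * k)⁻¹ *
          ∫ x in x₁..x₂,
            ((w x y₂ * pdy v x y₂ - v x y₂ * pdy w x y₂)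
              - (w x y₁ * pdy v x y₁ - v x y₁ * pdy w x y₁)) := by
  have hv1 : ContDiffOn ℝ 1 (fun p : ℝ × ℝ => v p.1 p.2) U := hv.of_le (by norm_num)
  have hw1 : ContDiffOn ℝ 1 (fun p : ℝ × ℝ => w p.1 p.2) U := hw.of_le (by norm_num)
  set Fv : ℝ × ℝ → ℂ := fun p => v p.1 p.2 with hFv
  set Fw : ℝ × ℝ → ℂ := fun p => w p.1 p.2 with hFw
  set c : ℂ := (2 * Complex.I * k)⁻¹ with hc
  set G : ℝ × ℝ → ℂ := fun p => Fv p * Fw p with hG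
  set PYv : ℝ × ℝ → ℂ := fun p => fderiv ℝ Fv p (0, 1) with hPYv
  set PYw : ℝ × ℝ → ℂ := fun p => fderiv ℝ Fw p (0, 1) with hPYw
  set Qv : ℝ × ℝ → ℂ := fun p => fderiv ℝ PYv p (0, 1) with hQv
  set Qw : ℝ × ℝ → ℂ := fun p => fderiv ℝ PYw p (0, 1) with hQw
  set H : ℝ × ℝ → ℂ := fun p => Fw p * PYv p - Fv p * PYw p with hH
  set PG : ℝ × ℝ → ℂ := fun p => fderiv ℝ G p (1, 0) with hPG
  set D : ℝ × ℝ → ℂ := fun p => Fw p * Qv p - Fv p * Qw p with hD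
  have hGC2 : ContDiffOn ℝ 2 G U := hv.mul hw
  have hGC1 : ContDiffOn ℝ 1 G U := hGC2.of_le (by norm_num)
  have hPYvC1 : ContDiffOn ℝ 1 PYv U := contDiffOn_fderiv_apply hU hv _
  have hPYwC1 : ContDiffOn ℝ 1 PYw U := contDiffOn_fderiv_apply hU hw _
  -- continuity hypotheses
  have hPGc : ContinuousOn PG U := cont_fderiv_apply hU hGC1 _
  have hQvc : ContinuousOn Qv U := cont_fderiv_apply hU hPYvC1 _
  have hQwc : ContinuousOn Qw U := cont_fderiv_apply hU hPYwC1 _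
  have hDc : ContinuousOn D U :=
    (hw1.continuousOn.mul hQvc).sub (hv1.continuousOn.mul hQwc)
  have hHc : ContinuousOn H U :=
    (hw1.continuousOn.mul hPYvC1.continuousOn).sub (hv1.continuousOn.mul hPYwC1.continuousOn)
  -- derivative hypotheses
  have hG' : ∀ x ∈ Set.Icc x₁ x₂, ∀ y ∈ Set.Icc y₁ y₂,
      HasDerivAt (fun t => G (t, y)) (PG (x, y)) x := by
    intro x hxm y hym
    exact slice_x hU hGC1 (hUrect (Set.mk_mem_prod hxm hym))
  have hH' : ∀ x ∈ Set.Icc x₁ x₂, ∀ y ∈ Set.Icc y₁ y₂,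
      HasDerivAt (fun s => H (x, s)) (D (x, y)) y := by
    intro x hxm y hym
    have hp : (x, y) ∈ U := hUrect (Set.mk_mem_prod hxm hym)
    have h1 : HasDerivAt (fun s => Fw (x, s)) (PYw (x, y)) y := slice_y hU hw1 hp
    have h2 : HasDerivAt (fun s => PYv (x, s)) (Qv (x, y)) y := slice_y hU hPYvC1 hp
    have h3 : HasDerivAt (fun s => Fv (x, s)) (PYv (x, y)) y := slice_y hU hv1 hp
    have h4 : HasDerivAt (fun s => PYw (x, s)) (Qw (x, y)) y := slice_y hU hPYwC1 hp
    have : HasDerivAt (fun s => H (x, s)) (PYw (x, y) * PYv (x, y) + Fw (x, y) * Qv (x, y)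
        - (PYv (x, y) * PYw (x, y) + Fv (x, y) * Qw (x, y))) y := (h1.mul h2).sub (h3.mul h4)
    convert this using 1
    simp only [hD]
    ring
  have core := green_core c hx.le hy.le hUrect hPGc hDc hHc hG' hH'
  -- pointwise identity for the integrand
  have hpoint : ∀ x ∈ Set.Icc x₁ x₂, ∀ y ∈ Set.Icc y₁ y₂,
      Lpar k v x y * w x y - Lpar' k w x y * v x y = PG (x, y) + c * D (x, y) := by
    intro x hxm y hym
    have hp : (x, y) ∈ U := hUrect (Set.mk_mem_prod hxm hym)
    have hvx : HasDerivAt (fun t => v t y) (fderiv ℝ Fv (x, y) (1, 0)) x := slice_x hU hv1 hp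
    have hwx : HasDerivAt (fun t => w t y) (fderiv ℝ Fw (x, y) (1, 0)) x := slice_x hU hw1 hp
    have hGx : HasDerivAt (fun t => v t y * w t y)
        (fderiv ℝ Fv (x, y) (1, 0) * w x y + v x y * fderiv ℝ Fw (x, y) (1, 0)) x := hvx.mul hwx
    have hPGval : PG (x, y)
        = fderiv ℝ Fv (x, y) (1, 0) * w x y + v x y * fderiv ℝ Fw (x, y) (1, 0) :=
      (slice_x hU hGC1 hp).unique hGx
    have e1 : pdx v x y = fderiv ℝ Fv (x, y) (1, 0) := hvx.deriv
    have e2 : pdx w x y = fderiv ℝ Fw (x, y) (1, 0) := hwx.deriv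
    have e3 : pdyy v x y = Qv (x, y) := (hasDerivAt_pdy hU hv hp).deriv
    have e4 : pdyy w x y = Qw (x, y) := (hasDerivAt_pdy hU hw hp).deriv
    simp only [Lpar, Lpar', e1, e2, e3, e4, hPGval, ← hc, hD]
    have : Fw (x, y) = w x y := rfl
    rw [this]
    have : Fv (x, y) = v x y := rfl
    rw [this]
    ring
  have step1 : (∫ x in x₁..x₂, ∫ y in y₁..y₂,
      (Lpar k v x y * w x y - Lpar' k w x y * v x y))
      = ∫ x in x₁..x₂, ∫ y in y₁..y₂, (PG (x, y) + c * D (x, y)) := by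
    apply intervalIntegral.integral_congr
    intro x hxm
    rw [Set.uIcc_of_le hx.le] at hxm
    apply intervalIntegral.integral_congr
    intro y hym
    rw [Set.uIcc_of_le hy.le] at hym
    exact hpoint x hxm y hym
  have step3 : (∫ y in y₁..y₂, (G (x₂, y) - G (x₁, y)))
      = ∫ y in y₁..y₂, (v x₂ y * w x₂ y - v x₁ y * w x₁ y) := rfl
  have step4 : (∫ x in x₁..x₂, (H (x, y₂) - H (x, y₁)))
      = ∫ x in x₁..x₂, ((w x y₂ * pdy v x y₂ - v x y₂ * pdy w x y₂)
          - (w x y₁ * pdy v x y₁ - v x y₁ * pdy w x y₁)) := by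
    apply intervalIntegral.integral_congr
    intro x hxm
    rw [Set.uIcc_of_le hx.le] at hxm
    have hp2 : (x, y₂) ∈ U := hUrect (Set.mk_mem_prod hxm (Set.right_mem_Icc.2 hy.le))
    have hp1 : (x, y₁) ∈ U := hUrect (Set.mk_mem_prod hxm (Set.left_mem_Icc.2 hy.le))
    have ev2 : pdy v x y₂ = PYv (x, y₂) := (slice_y hU hv1 hp2).deriv
    have ew2 : pdy w x y₂ = PYw (x, y₂) := (slice_y hU hw1 hp2).deriv
    have ev1 : pdy v x y₁ = PYv (x, y₁) := (slice_y hU hv1 hp1).deriv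
    have ew1 : pdy w x y₁ = PYw (x, y₁) := (slice_y hU hw1 hp1).deriv
    simp only [hH, hFv, hFw, ev2, ew2, ev1, ew1]
  rw [step1, core, step3, step4]
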